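/- Let Q be the contact-rate matrix of the star on n > 1 nodes with hub 1 (q_{1,i} = q_{i,1} = 1/(n−1) for i = 2,…,n, all other entries 0), and let S be a nonempty proper subset of V. If 1 ∈ S, the largest eigenvalue of Q_S equals −1/(n−1). If 1 ∉ S, the largest eigenvalue of Q_S equals −(1/2)·(n/(n−1))·(1 − √(1 − 4|S|/n²)). -/

import Mathlib

open Matrix Finset Real

/-- The matrix `Q_S`. -/
noncomputable def QS {n : ℕ} (Q : Matrix (Fin n) (Fin n) ℝ) (S : Finset (Fin n)) :
    Matrix (Fin n) (Fin n) ℝ :=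
  fun i j => if i = j then -(∑ l, Q i l) else if i ∈ S then 0 else Q i j

/-- The largest (real) eigenvalue of a matrix. -/
noncomputable def lambdaMax {n : ℕ} (M : Matrix (Fin n) (Fin n) ℝ) : ℝ :=
  sSup {μ : ℝ | ∃ x : Fin n → ℝ, x ≠ 0 ∧ M.mulVec x = μ • x}

/-- The contact rate matrix of the star on `n` nodes with hub node `1` (index `0`):
`q_{1,i} = q_{i,1} = 1/(n-1)` for the leaves, all other entries `0`. -/
noncomputable def Qstar (n : ℕ) : Matrix (Fin n) (Fin n) ℝ :=
  fun i j => if ((i : ℕ) = 0 ∧ (j : ℕ) ≠ 0) ∨ ((j : ℕ) = 0 ∧ (i : ℕ) ≠ 0)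
    then 1 / ((n : ℝ) - 1) else 0

section helpers

variable {n : ℕ} {z : Fin n}

lemma coe_ne_zero (hz : (z : ℕ) = 0) {j : Fin n} (hj : j ≠ z) : (j : ℕ) ≠ 0 := by
  intro h; exact hj (Fin.ext (by rw [h, hz]))

lemma qstar_zz (hz : (z : ℕ) = 0) : Qstar n z z = 0 := by simp [Qstar, hz]

lemma qstar_zj (hz : (z : ℕ) = 0) {j : Fin n} (hj : j ≠ z) : Qstar n z j = 1 / ((n:ℝ) - 1) := by
  simp [Qstar, hz, coe_ne_zero hz hj]

lemma qstar_iz (hz : (z : ℕ) = 0) {i : Fin n} (hi : i ≠ z) : Qstar n i z = 1 / ((n:ℝ) - 1) := by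
  simp [Qstar, hz, coe_ne_zero hz hi]

lemma qstar_ij (hz : (z : ℕ) = 0) {i j : Fin n} (hi : i ≠ z) (hj : j ≠ z) : Qstar n i j = 0 := by
  simp [Qstar, coe_ne_zero hz hi, coe_ne_zero hz hj]

lemma rowsum_z (hn : 2 ≤ n) (hz : (z : ℕ) = 0) : ∑ l, Qstar n z l = 1 := by
  have h1 : ∀ l : Fin n, Qstar n z l
      = 1 / ((n:ℝ) - 1) - (if l = z then 1 / ((n:ℝ) - 1) else 0) := by
    intro l
    by_cases hl : l = z
    · simp [hl, qstar_zz hz]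
    · simp [qstar_zj hz hl, hl]
  rw [Finset.sum_congr rfl fun l _ => h1 l, Finset.sum_sub_distrib,
    Finset.sum_const, Finset.sum_ite_eq' Finset.univ z (fun _ => 1 / ((n:ℝ) - 1))]
  have hd : ((n:ℝ) - 1) ≠ 0 := by
    have : (2:ℝ) ≤ (n:ℝ) := by exact_mod_cast hn
    intro h; linarith
  simp only [Finset.card_univ, Fintype.card_fin, nsmul_eq_mul, Finset.mem_univ,
    if_true, sub_eq_iff_eq_add]
  field_simp
  ring

lemma rowsum_i (hn : 2 ≤ n) (hz : (z : ℕ) = 0) {i : Fin n} (hi : i ≠ z) : ∑ l, Qstar n i l = 1 / ((n:ℝ) - 1) := by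
  have h1 : ∀ l : Fin n, Qstar n i l = (if l = z then 1 / ((n:ℝ) - 1) else 0) := by
    intro l
    by_cases hl : l = z
    · simp [hl, qstar_iz hz hi]
    · simp [hl, qstar_ij hz hi hl]
  rw [Finset.sum_congr rfl fun l _ => h1 l,
    Finset.sum_ite_eq' Finset.univ z (fun _ => 1 / ((n:ℝ) - 1))]
  simp

/-- hub row when hub in S -/
lemma mv_z_in (hn : 2 ≤ n) (hz : (z : ℕ) = 0) (S : Finset (Fin n)) (hzS : z ∈ S) (x : Fin n → ℝ) :
    (QS (Qstar n) S).mulVec x z = -(x z) := by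
  have h1 : ∀ j, QS (Qstar n) S z j * x j = if j = z then -(x j) else 0 := by
    intro j
    by_cases hj : j = z
    · subst hj; simp [QS, rowsum_z hn hz]
    · rw [if_neg hj]
      have hzj : ¬ z = j := fun h => hj h.symm
      have : QS (Qstar n) S z j = 0 := by simp [QS, hzj, hzS]
      rw [this, zero_mul]
  simp only [Matrix.mulVec, dotProduct]
  rw [Finset.sum_congr rfl fun j _ => h1 j,
    Finset.sum_ite_eq' Finset.univ z (fun j => -(x j))]
  simp

/-- hub row when hub not in S -/
lemma mv_z_out (hn : 2 ≤ n) (hz : (z : ℕ) = 0) (S : Finset (Fin n)) (hzS : z ∉ S) (x : Fin n → ℝ) :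
    (QS (Qstar n) S).mulVec x z
      = (1 / ((n:ℝ) - 1)) * (∑ j, x j) + (-1 - 1 / ((n:ℝ) - 1)) * x z := by
  have h1 : ∀ j, QS (Qstar n) S z j * x j
      = (1 / ((n:ℝ) - 1)) * x j
        + (if j = z then (-1 - 1 / ((n:ℝ) - 1)) * x j else 0) := by
    intro j
    by_cases hj : j = z
    · subst hj
      have h2 : QS (Qstar n) S j j = -1 := by simp [QS, rowsum_z hn hz]
      rw [h2, if_pos rfl]; ring
    · have : QS (Qstar n) S z j = 1 / ((n:ℝ) - 1) := by
        simp only [QS]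
        rw [if_neg (fun h : z = j => hj h.symm), if_neg hzS, qstar_zj hz hj]
      rw [this, if_neg hj, add_zero]
  simp only [Matrix.mulVec, dotProduct]
  rw [Finset.sum_congr rfl fun j _ => h1 j, Finset.sum_add_distrib,
    ← Finset.mul_sum,
    Finset.sum_ite_eq' Finset.univ z (fun j => (-1 - 1 / ((n:ℝ) - 1)) * x j)]
  simp

/-- row i ∈ S, i ≠ z -/
lemma mv_in (hn : 2 ≤ n) (hz : (z : ℕ) = 0) (S : Finset (Fin n)) {i : Fin n} (hiS : i ∈ S) (hiz : i ≠ z) (x : Fin n → ℝ) :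
    (QS (Qstar n) S).mulVec x i = -(1 / ((n:ℝ) - 1)) * x i := by
  have h1 : ∀ j, QS (Qstar n) S i j * x j
      = if j = i then -(1 / ((n:ℝ) - 1)) * x j else 0 := by
    intro j
    by_cases hj : j = i
    · subst hj
      have : QS (Qstar n) S j j = -(1 / ((n:ℝ) - 1)) := by
        simp [QS, rowsum_i hn hz hiz]
      rw [this, if_pos rfl]
    · have : QS (Qstar n) S i j = 0 := by
        simp only [QS]
        rw [if_neg (fun h : i = j => hj h.symm), if_pos hiS]
      rw [this, zero_mul, if_neg hj]
  simp only [Matrix.mulVec, dotProduct]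
  rw [Finset.sum_congr rfl fun j _ => h1 j,
    Finset.sum_ite_eq' Finset.univ i (fun j => -(1 / ((n:ℝ) - 1)) * x j)]
  simp

/-- row i ∉ S, i ≠ z -/
lemma mv_out (hn : 2 ≤ n) (hz : (z : ℕ) = 0) (S : Finset (Fin n)) {i : Fin n} (hiS : i ∉ S) (hiz : i ≠ z) (x : Fin n → ℝ) :
    (QS (Qstar n) S).mulVec x i
      = -(1 / ((n:ℝ) - 1)) * x i + (1 / ((n:ℝ) - 1)) * x z := by
  have h1 : ∀ j, QS (Qstar n) S i j * x j
      = (if j = i then -(1 / ((n:ℝ) - 1)) * x j else 0)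
        + (if j = z then (1 / ((n:ℝ) - 1)) * x j else 0) := by
    intro j
    by_cases hj : j = i
    · subst hj
      have h2 : QS (Qstar n) S j j = -(1 / ((n:ℝ) - 1)) := by
        simp [QS, rowsum_i hn hz hiz]
      rw [h2, if_pos rfl, if_neg hiz, add_zero]
    · by_cases hjz : j = z
      · subst hjz
        have h2 : QS (Qstar n) S i j = 1 / ((n:ℝ) - 1) := by
          simp only [QS]
          rw [if_neg (fun h : i = j => hj h.symm), if_neg hiS, qstar_iz hz hiz]
        rw [h2, if_neg hj, if_pos rfl, zero_add]
      · have h2 : QS (Qstar n) S i j = 0 := by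
          simp only [QS]
          rw [if_neg (fun h : i = j => hj h.symm), if_neg hiS, qstar_ij hz hiz hjz]
        rw [h2, zero_mul, if_neg hj, if_neg hjz, add_zero]
  simp only [Matrix.mulVec, dotProduct]
  rw [Finset.sum_congr rfl fun j _ => h1 j, Finset.sum_add_distrib,
    Finset.sum_ite_eq' Finset.univ i (fun j => -(1 / ((n:ℝ) - 1)) * x j),
    Finset.sum_ite_eq' Finset.univ z (fun j => (1 / ((n:ℝ) - 1)) * x j)]
  simp

end helpers

set_option maxHeartbeats 2000000 in
lemma lambda_max_eq {n : ℕ} (hn : 2 ≤ n) (S : Finset (Fin n)) (hS : S.Nonempty)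
    (hSproper : S ≠ Finset.univ) (z : Fin n) (hz : (z:ℕ) = 0) :
    (z ∈ S → lambdaMax (QS (Qstar n) S) = -(1 / ((n : ℝ) - 1))) ∧
    (z ∉ S → lambdaMax (QS (Qstar n) S)
        = -(1/2) * ((n : ℝ) / ((n : ℝ) - 1))
            * (1 - Real.sqrt (1 - 4 * (S.card : ℝ) / (n : ℝ) ^ 2))) := by
  have hnR : (2:ℝ) ≤ (n:ℝ) := by exact_mod_cast hn
  have hd0 : (0:ℝ) < (n:ℝ) - 1 := by linarith
  have hd : ((n:ℝ) - 1) ≠ 0 := ne_of_gt hd0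
  have hn0' : (n:ℝ) ≠ 0 := by intro h; rw [h] at hnR; linarith
  have ha0 : (0:ℝ) < 1 / ((n:ℝ)-1) := by positivity
  have ha1 : 1 / ((n:ℝ)-1) ≤ 1 := by rw [div_le_one hd0]; linarith
  constructor
  · -- Part 1 : hub in S
    intro hmem
    have hgreat : IsGreatest {μ : ℝ | ∃ x : Fin n → ℝ, x ≠ 0 ∧
        (QS (Qstar n) S).mulVec x = μ • x} (-(1 / ((n:ℝ)-1))) := by
      constructor
      · -- membership: e_{i1} is an eigenvector
        have h1n : (1:ℕ) < n := by omega
        have hi1z : (⟨1, h1n⟩ : Fin n) ≠ z := by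
          intro h; have := congrArg Fin.val h; rw [hz] at this; simp at this
        refine ⟨Pi.single (⟨1, h1n⟩ : Fin n) 1, ?_, ?_⟩
        · intro h
          have := congrFun h (⟨1, h1n⟩ : Fin n)
          simp at this
        · funext i
          have hxz : (Pi.single (⟨1, h1n⟩ : Fin n) 1 : Fin n → ℝ) z = 0 :=
            Pi.single_eq_of_ne (fun h => hi1z h.symm) 1
          by_cases hiz : i = z
          · subst hiz
            rw [mv_z_in hn hz S hmem, hxz]
            simp [hxz]
          · by_cases hiS : i ∈ S
            · rw [mv_in hn hz S hiS hiz]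
              simp [smul_eq_mul]
            · rw [mv_out hn hz S hiS hiz, hxz]
              simp [smul_eq_mul]
      · rintro μ ⟨x, hx0, hxe⟩
        by_contra hlt
        push_neg at hlt
        have hμa : μ + 1/((n:ℝ)-1) ≠ 0 := by intro h; linarith
        have hμ1 : μ + 1 ≠ 0 := by intro h; linarith
        apply hx0
        have hxz0 : x z = 0 := by
          have h := congrFun hxe z
          rw [mv_z_in hn hz S hmem] at h
          simp only [Pi.smul_apply, smul_eq_mul] at h
          have h2 : (μ + 1) * x z = 0 := by linear_combination -h
          exact (mul_eq_zero.1 h2).resolve_left hμ1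
        funext i
        simp only [Pi.zero_apply]
        by_cases hiz : i = z
        · subst hiz; exact hxz0
        · have h := congrFun hxe i
          simp only [Pi.smul_apply, smul_eq_mul] at h
          by_cases hiS : i ∈ S
          · rw [mv_in hn hz S hiS hiz] at h
            have h2 : (μ + 1/((n:ℝ)-1)) * x i = 0 := by linear_combination -h
            exact (mul_eq_zero.1 h2).resolve_left hμa
          · rw [mv_out hn hz S hiS hiz, hxz0, mul_zero, add_zero] at h
            have h2 : (μ + 1/((n:ℝ)-1)) * x i = 0 := by linear_combination -h
            exact (mul_eq_zero.1 h2).resolve_left hμa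
    unfold lambdaMax
    exact hgreat.csSup_eq
  · -- Part 2 : hub not in S
    intro hmem
    have hm1 : 1 ≤ S.card := hS.card_pos
    have hmlt : S.card < n := by
      have h1 : S ⊂ Finset.univ := Finset.ssubset_univ_iff.mpr hSproper
      have := Finset.card_lt_card h1
      simpa [Finset.card_univ] using this
    have hm1R : (1:ℝ) ≤ (S.card:ℝ) := by exact_mod_cast hm1
    have hmR : (S.card:ℝ) ≤ (n:ℝ) - 1 := by
      have : (S.card:ℝ) + 1 ≤ (n:ℝ) := by exact_mod_cast hmlt
      linarith
    have hnn : (0:ℝ) ≤ (n:ℝ)^2 - 4*(S.card:ℝ) := by nlinarith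
    set s : ℝ := Real.sqrt ((n:ℝ)^2 - 4*(S.card:ℝ)) with hsdef
    have hs0 : 0 ≤ s := Real.sqrt_nonneg _
    have hs2 : s^2 = (n:ℝ)^2 - 4*(S.card:ℝ) := Real.sq_sqrt hnn
    have hsge : (n:ℝ) - 2 ≤ s := by
      calc (n:ℝ) - 2 = Real.sqrt (((n:ℝ)-2)^2) := (Real.sqrt_sq (by linarith)).symm
        _ ≤ s := by rw [hsdef]; exact Real.sqrt_le_sqrt (by nlinarith)
    set lam : ℝ := (s - (n:ℝ)) / (2*((n:ℝ)-1)) with hlamdef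
    have hlam_a : -(1/((n:ℝ)-1)) ≤ lam := by
      rw [hlamdef, le_div_iff₀ (by linarith : (0:ℝ) < 2*((n:ℝ)-1))]
      have h2 : -(1/((n:ℝ)-1)) * (2*((n:ℝ)-1)) = -2 := by field_simp
      rw [h2]; linarith
    have htarget : -(1/2) * ((n : ℝ) / ((n : ℝ) - 1))
        * (1 - Real.sqrt (1 - 4 * (S.card : ℝ) / (n : ℝ) ^ 2)) = lam := by
      have hn0 : (0:ℝ) < (n:ℝ) := by linarith
      have h1 : 1 - 4 * (S.card : ℝ) / (n : ℝ) ^ 2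
          = ((n:ℝ)^2 - 4*(S.card:ℝ)) / (n:ℝ)^2 := by field_simp
      rw [h1, Real.sqrt_div hnn, Real.sqrt_sq hn0.le, hlamdef, ← hsdef]
      field_simp
      ring
    rw [htarget]
    have hgreat : IsGreatest {μ : ℝ | ∃ x : Fin n → ℝ, x ≠ 0 ∧
        (QS (Qstar n) S).mulVec x = μ • x} lam := by
      constructor
      · -- membership
        by_cases hK0 : (S.card:ℝ) = (n:ℝ)-1
        · -- S = complement of {z}
          have hcast : ((n-1:ℕ):ℝ) = (n:ℝ)-1 := by
            have h1 : (1:ℕ) ≤ n := by omega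
            push_cast [h1]
            ring
          have hmn : S.card = n - 1 := by
            have := hK0.trans hcast.symm
            exact_mod_cast this
          have hSall : ∀ j : Fin n, j ≠ z → j ∈ S := by
            have hsub : S ⊆ Finset.univ.erase z :=
              fun j hj => Finset.mem_erase.mpr ⟨fun h => hmem (h ▸ hj), Finset.mem_univ j⟩
            have hcarde : (Finset.univ.erase z).card = n - 1 := by
              rw [Finset.card_erase_of_mem (Finset.mem_univ z), Finset.card_univ,
                Fintype.card_fin]
            have hSe : S = Finset.univ.erase z :=
              Finset.eq_of_subset_of_card_le hsub (by rw [hcarde, hmn])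
            intro j hj
            rw [hSe]
            exact Finset.mem_erase.mpr ⟨hj, Finset.mem_univ j⟩
          have hseq : s = (n:ℝ) - 2 := by
            rw [hsdef, show (n:ℝ)^2 - 4*(S.card:ℝ) = ((n:ℝ)-2)^2 by
              linear_combination (-4:ℝ)*hK0]
            exact Real.sqrt_sq (by linarith)
          have hlamB : lam = -(1/((n:ℝ)-1)) := by
            rw [hlamdef, hseq]
            field_simp
            ring
          set x : Fin n → ℝ := fun j => if j = z then (1:ℝ) else 1 - 1/((n:ℝ)-1)
            with hxdef
          have hxz1 : x z = 1 := by simp [hxdef]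
          have hT : ∑ j, x j = (n:ℝ)-1 := by
            have h1 : ∀ j : Fin n, x j
                = (1 - 1/((n:ℝ)-1)) + (if j = z then 1/((n:ℝ)-1) else 0) := by
              intro j
              simp only [hxdef]
              by_cases hj : j = z
              · rw [if_pos hj, if_pos hj]; ring
              · rw [if_neg hj, if_neg hj]; ring
            rw [Finset.sum_congr rfl fun j _ => h1 j, Finset.sum_add_distrib,
              Finset.sum_const, Finset.sum_ite_eq' Finset.univ z (fun _ => 1/((n:ℝ)-1))]
            simp only [Finset.card_univ, Fintype.card_fin, nsmul_eq_mul,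
              Finset.mem_univ, if_true]
            field_simp
            ring
          refine ⟨x, ?_, ?_⟩
          · intro h
            have h0 := congrFun h z
            rw [hxz1] at h0
            simp at h0
          · funext i
            by_cases hiz : i = z
            · subst hiz
              rw [mv_z_out hn hz S hmem x, hT, hxz1, Pi.smul_apply, smul_eq_mul,
                hxz1, hlamB]
              field_simp
              ring
            · have hiS : i ∈ S := hSall i hiz
              rw [mv_in hn hz S hiS hiz x, Pi.smul_apply, smul_eq_mul, hlamB]
        · -- proper subcase
          have hKpos : (S.card:ℝ) < (n:ℝ)-1 := lt_of_le_of_ne hmR hK0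
          have hsgt : (n:ℝ) - 2 < s := by
            by_contra hle
            push_neg at hle
            nlinarith [hs2]
          have hlampos : 0 < lam + 1/((n:ℝ)-1) := by
            rw [hlamdef, show (s - (n:ℝ))/(2*((n:ℝ)-1)) + 1/((n:ℝ)-1)
              = (s - ((n:ℝ)-2))/(2*((n:ℝ)-1)) by field_simp; ring]
            apply div_pos <;> linarith
          have hquadlam : (lam+1)*(lam + 1/((n:ℝ)-1))
              = ((n:ℝ)-1-(S.card:ℝ)) * (1/((n:ℝ)-1))^2 := by
            rw [hlamdef]
            field_simp
            linear_combination hs2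
          set x : Fin n → ℝ := fun j => if j ∈ S then 0
            else if j = z then lam + 1/((n:ℝ)-1) else 1/((n:ℝ)-1) with hxdef
          have hxz1 : x z = lam + 1/((n:ℝ)-1) := by
            simp [hxdef, hmem]
          have hT : ∑ j, x j
              = (lam + 1/((n:ℝ)-1)) + (1/((n:ℝ)-1)) * ((n:ℝ)-1-(S.card:ℝ)) := by
            have h1 : ∀ j : Fin n, x j
                = 1/((n:ℝ)-1) + (if j ∈ S then -(1/((n:ℝ)-1)) else 0)
                  + (if j = z then lam else 0) := by
              intro j
              simp only [hxdef]
              by_cases hjS : j ∈ S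
              · have hjz : j ≠ z := fun h => hmem (h ▸ hjS)
                rw [if_pos hjS, if_pos hjS, if_neg hjz]; ring
              · by_cases hjz : j = z
                · rw [if_neg hjS, if_pos hjz, if_neg hjS, if_pos hjz]; ring
                · rw [if_neg hjS, if_neg hjz, if_neg hjS, if_neg hjz]; ring
            rw [Finset.sum_congr rfl fun j _ => h1 j, Finset.sum_add_distrib,
              Finset.sum_add_distrib, Finset.sum_const, Finset.sum_ite_mem,
              Finset.univ_inter, Finset.sum_const,
              Finset.sum_ite_eq' Finset.univ z (fun _ => lam)]
            simp only [Finset.card_univ, Fintype.card_fin, nsmul_eq_mul,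
              Finset.mem_univ, if_true]
            ring
          refine ⟨x, ?_, ?_⟩
          · intro h
            have h0 := congrFun h z
            rw [hxz1] at h0
            simp only [Pi.zero_apply] at h0
            linarith
          · funext i
            by_cases hiz : i = z
            · subst hiz
              rw [mv_z_out hn hz S hmem x, hT, hxz1, Pi.smul_apply, smul_eq_mul, hxz1]
              linear_combination -hquadlam
            · by_cases hiS : i ∈ S
              · have hxi : x i = 0 := by simp [hxdef, hiS]
                rw [mv_in hn hz S hiS hiz x, hxi, Pi.smul_apply, smul_eq_mul, hxi,
                  mul_zero, mul_zero]
              · have hxi : x i = 1/((n:ℝ)-1) := by simp [hxdef, hiS, hiz]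
                rw [mv_out hn hz S hiS hiz x, hxi, hxz1, Pi.smul_apply, smul_eq_mul, hxi]
                ring
      · -- upper bound
        rintro μ ⟨x, hx0, hxe⟩
        by_cases hμa : μ = -(1/((n:ℝ)-1))
        · rw [hμa]; exact hlam_a
        · have hμa' : μ + 1/((n:ℝ)-1) ≠ 0 := fun h => hμa (by linarith)
          have hxS : ∀ i ∈ S, x i = 0 := by
            intro i hi
            have hiz : i ≠ z := fun h => hmem (h ▸ hi)
            have h := congrFun hxe i
            rw [mv_in hn hz S hi hiz x] at h
            simp only [Pi.smul_apply, smul_eq_mul] at h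
            have h2 : (μ + 1/((n:ℝ)-1)) * x i = 0 := by linear_combination -h
            exact (mul_eq_zero.1 h2).resolve_left hμa'
          have hxout : ∀ i, i ∉ S → i ≠ z →
              (μ + 1/((n:ℝ)-1)) * x i = (1/((n:ℝ)-1)) * x z := by
            intro i hiS hiz
            have h := congrFun hxe i
            rw [mv_out hn hz S hiS hiz x] at h
            simp only [Pi.smul_apply, smul_eq_mul] at h
            linear_combination -h
          have hxz : x z ≠ 0 := by
            intro h0
            apply hx0
            funext i
            simp only [Pi.zero_apply]
            by_cases hiz : i = z
            · subst hiz; exact h0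
            · by_cases hiS : i ∈ S
              · exact hxS i hiS
              · have h2 := hxout i hiS hiz
                rw [h0, mul_zero] at h2
                exact (mul_eq_zero.1 h2).resolve_left hμa'
          have hhub := congrFun hxe z
          rw [mv_z_out hn hz S hmem x] at hhub
          simp only [Pi.smul_apply, smul_eq_mul] at hhub
          have hTsum : (μ + 1/((n:ℝ)-1)) * (∑ j, x j)
              = (μ + 1/((n:ℝ)-1)) * x z
                + ((n:ℝ)-1-(S.card:ℝ)) * ((1/((n:ℝ)-1)) * x z) := by
            have h1 : ∀ j : Fin n, (μ + 1/((n:ℝ)-1)) * x j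
                = (1/((n:ℝ)-1)) * x z + (if j ∈ S then -((1/((n:ℝ)-1)) * x z) else 0)
                  + (if j = z then (μ + 1/((n:ℝ)-1)) * x z - (1/((n:ℝ)-1)) * x z
                    else 0) := by
              intro j
              by_cases hjS : j ∈ S
              · have hjz : j ≠ z := fun h => hmem (h ▸ hjS)
                rw [hxS j hjS, if_pos hjS, if_neg hjz, mul_zero]
                ring
              · by_cases hjz : j = z
                · subst hjz
                  rw [if_neg hjS, if_pos rfl]
                  ring
                · rw [if_neg hjS, if_neg hjz, hxout j hjS hjz]
                  ring
            rw [Finset.mul_sum, Finset.sum_congr rfl fun j _ => h1 j,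
              Finset.sum_add_distrib, Finset.sum_add_distrib, Finset.sum_const,
              Finset.sum_ite_mem, Finset.univ_inter, Finset.sum_const,
              Finset.sum_ite_eq' Finset.univ z
                (fun _ => (μ + 1/((n:ℝ)-1)) * x z - (1/((n:ℝ)-1)) * x z)]
            simp only [Finset.card_univ, Fintype.card_fin, nsmul_eq_mul,
              Finset.mem_univ, if_true]
            ring
          have hq : ((μ+1)*(μ + 1/((n:ℝ)-1))
              - ((n:ℝ)-1-(S.card:ℝ)) * (1/((n:ℝ)-1))^2) * x z = 0 := by
            linear_combination (1/((n:ℝ)-1)) * hTsum - (μ + 1/((n:ℝ)-1)) * hhub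
          have hq2 : (μ+1)*(μ + 1/((n:ℝ)-1))
              = ((n:ℝ)-1-(S.card:ℝ)) * (1/((n:ℝ)-1))^2 := by
            have h3 := (mul_eq_zero.1 hq).resolve_right hxz
            linarith
          have hq2' : (μ + 1) * (μ * ((n:ℝ)-1) + 1) * ((n:ℝ)-1)^2
              = ((n:ℝ)-1-(S.card:ℝ)) * ((n:ℝ)-1) := by
            field_simp at hq2
            linear_combination ((n:ℝ)-1) * hq2
          have hfac : ((2*((n:ℝ)-1))*μ - (s - (n:ℝ)))
              * ((2*((n:ℝ)-1))*μ - (-s - (n:ℝ))) * ((n:ℝ)-1) = 0 := by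
            linear_combination 4*hq2' - ((n:ℝ)-1)*hs2
          rcases mul_eq_zero.1 hfac with h|h
          · rcases mul_eq_zero.1 h with h'|h'
            · have he : μ = lam := by
                rw [hlamdef, eq_div_iff (ne_of_gt (by linarith : (0:ℝ) < 2*((n:ℝ)-1)))]
                linarith
              exact le_of_eq he
            · have h2 : μ = (-s-(n:ℝ))/(2*((n:ℝ)-1)) := by
                rw [eq_div_iff (ne_of_gt (by linarith : (0:ℝ) < 2*((n:ℝ)-1)))]
                linarith
              rw [h2, hlamdef]
              rw [div_le_div_iff₀ (by linarith) (by linarith)]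
              nlinarith [hs0, hd0]
          · exact absurd h hd
    unfold lambdaMax
    exact hgreat.csSup_eq


/-- For the star on `n > 1` nodes with hub node `1` and a nonempty proper subset `S`:
if the hub is in `S`, the largest eigenvalue of `Q_S` is `-1/(n-1)`; if the hub is not in
`S`, it is `-(1/2)(n/(n-1))(1 - √(1 - 4|S|/n²))`. -/
theorem stmt13 (n : ℕ) (hn : 2 ≤ n) (S : Finset (Fin n))
    (hS : S.Nonempty) (hSproper : S ≠ Finset.univ) :
    ((⟨0, by omega⟩ : Fin n) ∈ S →
      lambdaMax (QS (Qstar n) S) = -(1 / ((n : ℝ) - 1))) ∧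
    ((⟨0, by omega⟩ : Fin n) ∉ S →
      lambdaMax (QS (Qstar n) S)
        = -(1/2) * ((n : ℝ) / ((n : ℝ) - 1))
            * (1 - Real.sqrt (1 - 4 * (S.card : ℝ) / (n : ℝ) ^ 2))) :=
  lambda_max_eq hn S hS hSproper _ rfl
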